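/- For every r > 0 there exists a constant C > 0 (depending only on r) such that for every s ∈ ℝ with s ≠ 0, one has |∫₀¹ cos(s·r·x)/√(cosh r − cosh(r·x)) dx| ≤ C·|s|^{−1/2}. -/

import Mathlib

open Real MeasureTheory intervalIntegral Set

lemma aux_cosh_interp (r : ℝ) {x : ℝ} (hx0 : 0 ≤ x) (hx1 : x ≤ 1) :
    Real.cosh (r * x) ≤ (1 - x) + x * Real.cosh r := by
  have h1 := convexOn_exp.2 (Set.mem_univ (0:ℝ)) (Set.mem_univ r)
      (by linarith : (0:ℝ) ≤ 1 - x) hx0 (by ring)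
  have h2 := convexOn_exp.2 (Set.mem_univ (0:ℝ)) (Set.mem_univ (-r))
      (by linarith : (0:ℝ) ≤ 1 - x) hx0 (by ring)
  simp only [smul_eq_mul, mul_zero, zero_add, Real.exp_zero, mul_one] at h1 h2
  rw [Real.cosh_eq, Real.cosh_eq]
  have e1 : x * r = r * x := by ring
  have e2 : x * -r = -(r * x) := by ring
  rw [e1] at h1; rw [e2] at h2
  nlinarith [h1, h2]

lemma aux_u_lb (r : ℝ) {x : ℝ} (hx0 : 0 ≤ x) (hx1 : x ≤ 1) :
    (1 - x) * (Real.cosh r - 1) ≤ Real.cosh r - Real.cosh (r * x) := by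
  nlinarith [aux_cosh_interp r hx0 hx1]

lemma aux_hasDerivAt_g (r : ℝ) {x : ℝ}
    (hu : 0 < Real.cosh r - Real.cosh (r * x)) :
    HasDerivAt (fun y => 1 / Real.sqrt (Real.cosh r - Real.cosh (r * y)))
      (r * Real.sinh (r * x) /
        (2 * (Real.cosh r - Real.cosh (r * x)) * Real.sqrt (Real.cosh r - Real.cosh (r * x)))) x := by
  have h1 : HasDerivAt (fun y : ℝ => r * y) r x := by
    simpa using (hasDerivAt_id x).const_mul r
  have h2 : HasDerivAt (fun y => Real.cosh r - Real.cosh (r * y))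
      (-(Real.sinh (r * x) * r)) x := by
    have h := (hasDerivAt_const x (Real.cosh r)).sub ((Real.hasDerivAt_cosh (r*x)).comp x h1)
    rw [zero_sub] at h
    exact h
  have hsq : 0 < Real.sqrt (Real.cosh r - Real.cosh (r * x)) := Real.sqrt_pos.2 hu
  have h3 : HasDerivAt (fun y => Real.sqrt (Real.cosh r - Real.cosh (r * y)))
      (1 / (2 * Real.sqrt (Real.cosh r - Real.cosh (r * x))) * -(Real.sinh (r * x) * r)) x :=
    (Real.hasDerivAt_sqrt hu.ne').comp x h2
  have h4 := h3.inv hsq.ne'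
  simp only [one_div] at h4 ⊢
  refine HasDerivAt.congr_deriv h4 ?_
  rw [Real.sq_sqrt hu.le]
  field_simp

lemma aux_ptwise (r : ℝ) (hr : 0 < r) (θ : ℝ) {x : ℝ} (hx0 : 0 ≤ x) (hx1 : x ≤ 1) :
    |Real.cos (θ * x) / Real.sqrt (Real.cosh r - Real.cosh (r * x))| ≤
      (1 / Real.sqrt (Real.cosh r - 1)) * (1 - x) ^ (-(1:ℝ)/2) := by
  have hcr : (1:ℝ) < Real.cosh r := Real.one_lt_cosh.2 hr.ne'
  rcases eq_or_lt_of_le hx1 with h1 | h1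
  · subst h1
    simp only [mul_one, sub_self, Real.sqrt_zero, div_zero, abs_zero]
    rw [Real.zero_rpow (by norm_num)]
    simp
  · have hub := aux_u_lb r hx0 hx1
    have hpos : 0 < (1 - x) * (Real.cosh r - 1) := by
      apply mul_pos (by linarith) (by linarith)
    have hupos : 0 < Real.cosh r - Real.cosh (r * x) := lt_of_lt_of_le hpos hub
    have hsq : 0 < Real.sqrt (Real.cosh r - Real.cosh (r * x)) := Real.sqrt_pos.2 hupos
    have hb1 : |Real.cos (θ * x) / Real.sqrt (Real.cosh r - Real.cosh (r * x))| ≤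
        1 / Real.sqrt (Real.cosh r - Real.cosh (r * x)) := by
      rw [abs_div, abs_of_pos hsq]
      gcongr
      exact Real.abs_cos_le_one _
    refine hb1.trans ?_
    have hsm : Real.sqrt ((1 - x) * (Real.cosh r - 1)) ≤
        Real.sqrt (Real.cosh r - Real.cosh (r * x)) := Real.sqrt_le_sqrt hub
    have h2 : 1 / Real.sqrt (Real.cosh r - Real.cosh (r * x)) ≤
        1 / Real.sqrt ((1 - x) * (Real.cosh r - 1)) := by
      apply one_div_le_one_div_of_le (Real.sqrt_pos.2 hpos) hsm
    refine h2.trans_eq ?_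
    rw [Real.sqrt_mul (by linarith)]
    rw [show (-(1:ℝ)/2) = -(1/2) by norm_num, Real.rpow_neg (by linarith),
      ← Real.sqrt_eq_rpow]
    rw [one_div, mul_inv, one_div]
    rw [mul_comm]

lemma aux_G_int (c : ℝ) (a b : ℝ) :
    IntervalIntegrable (fun x => c * (1 - x) ^ (-(1:ℝ)/2)) volume a b := by
  have h : IntervalIntegrable (fun x : ℝ => x ^ (-(1:ℝ)/2)) volume (1-a) (1-b) :=
    intervalIntegrable_rpow' (by norm_num)
  have h2 := (h.comp_sub_left 1)
  simp only [sub_sub_cancel] at h2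
  exact h2.const_mul c

lemma aux_G_val (a : ℝ) (ha : a ≤ 1) :
    ∫ x in a..1, (1 - x) ^ (-(1:ℝ)/2) = 2 * (1 - a) ^ ((1:ℝ)/2) := by
  have := intervalIntegral.integral_comp_sub_left (fun x : ℝ => x ^ (-(1:ℝ)/2)) 1
    (a := a) (b := 1)
  rw [this]
  norm_num
  rw [integral_rpow (Or.inl (by norm_num))]
  rw [Real.zero_rpow (by norm_num)]
  norm_num
  ring

lemma aux_f_int (r : ℝ) (hr : 0 < r) (θ : ℝ) :
    IntervalIntegrable
      (fun x => Real.cos (θ * x) / Real.sqrt (Real.cosh r - Real.cosh (r * x))) volume 0 1 := by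
  apply (aux_G_int (1 / Real.sqrt (Real.cosh r - 1)) 0 1).mono_fun' ?_ ?_
  · apply Measurable.aestronglyMeasurable
    apply Measurable.div
    · fun_prop
    · fun_prop
  · filter_upwards [ae_restrict_mem measurableSet_uIoc] with x hx
    rw [Set.uIoc_of_le (by norm_num : (0:ℝ) ≤ 1)] at hx
    rw [Real.norm_eq_abs]
    exact aux_ptwise r hr θ hx.1.le hx.2

lemma aux_key (r : ℝ) (hr : 0 < r) (t : ℝ) (ht : 0 < t) :
    |∫ x in (0:ℝ)..1, Real.cos (t * r * x) / Real.sqrt (Real.cosh r - Real.cosh (r * x))| ≤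
      (2 * (1 / Real.sqrt (Real.cosh r - 1)) * (1 + 1/r)) * t ^ (-(1:ℝ)/2) := by
  have hcr : (1:ℝ) < Real.cosh r := Real.one_lt_cosh.2 hr.ne'
  set c := 1 / Real.sqrt (Real.cosh r - 1) with hc_def
  have hc : 0 < c := by
    have h0 : 0 < Real.sqrt (Real.cosh r - 1) := Real.sqrt_pos.2 (by linarith)
    rw [hc_def]; positivity
  set f := fun x => Real.cos (t * r * x) / Real.sqrt (Real.cosh r - Real.cosh (r * x)) with hf_def
  have hfi : IntervalIntegrable f volume 0 1 := aux_f_int r hr (t*r)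
  have hbound : ∀ x ∈ Set.Icc (0:ℝ) 1, |f x| ≤ c * (1-x) ^ (-(1:ℝ)/2) := by
    intro x hx
    exact aux_ptwise r hr (t*r) hx.1 hx.2
  have hrpow_pos : 0 < t ^ (-(1:ℝ)/2) := Real.rpow_pos_of_pos ht _
  have hr1 : (0:ℝ) < 1 + 1/r := by positivity
  rcases le_or_gt t 1 with hle | hgt
  · -- small t
    have h1 : |∫ x in (0:ℝ)..1, f x| ≤ |∫ x in (0:ℝ)..1, c * (1-x) ^ (-(1:ℝ)/2)| := by
      rw [← Real.norm_eq_abs]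
      apply intervalIntegral.norm_integral_le_abs_of_norm_le ?_ (aux_G_int c 0 1)
      filter_upwards [ae_restrict_mem measurableSet_uIoc] with x hx
      rw [Set.uIoc_of_le (by norm_num : (0:ℝ) ≤ 1)] at hx
      exact hbound x ⟨hx.1.le, hx.2⟩
    have h2 : ∫ x in (0:ℝ)..1, c * (1-x) ^ (-(1:ℝ)/2) = 2 * c := by
      rw [intervalIntegral.integral_const_mul, aux_G_val 0 (by norm_num)]
      norm_num [Real.one_rpow, mul_comm]
    have h3 : (1:ℝ) ≤ t ^ (-(1:ℝ)/2) := by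
      rw [show (-(1:ℝ)/2) = -(1/2) by norm_num, Real.rpow_neg ht.le]
      rw [one_le_inv_iff₀]
      exact ⟨Real.rpow_pos_of_pos ht _, Real.rpow_le_one ht.le hle (by norm_num)⟩
    rw [h2] at h1
    have h4 : |(2:ℝ) * c| = 2 * c := abs_of_pos (by positivity)
    rw [h4] at h1
    calc |∫ x in (0:ℝ)..1, f x| ≤ 2 * c := h1
      _ = (2 * c) * 1 := by ring
      _ ≤ (2 * c * (1 + 1/r)) * t ^ (-(1:ℝ)/2) := by
          apply mul_le_mul _ h3 (by norm_num) (by positivity)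
          nlinarith [mul_pos hc (one_div_pos.2 hr)]
  · -- large t
    set a := 1 - 1/t with ha_def
    have hδ : 0 < 1/t := by positivity
    have hδ1 : 1/t < 1 := by rw [div_lt_one ht]; exact hgt
    have ha0 : 0 < a := by rw [ha_def]; linarith
    have ha1 : a < 1 := by rw [ha_def]; linarith
    set θ := t * r with hθ_def
    have hθpos : 0 < θ := mul_pos ht hr
    set g := fun x => 1 / Real.sqrt (Real.cosh r - Real.cosh (r * x)) with hg_def
    set g' := fun x => r * Real.sinh (r * x) /
        (2 * (Real.cosh r - Real.cosh (r * x)) * Real.sqrt (Real.cosh r - Real.cosh (r * x)))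
      with hg'_def
    have hupos : ∀ x ∈ Set.Icc (0:ℝ) a, 0 < Real.cosh r - Real.cosh (r*x) := by
      intro x hx
      have h1 := aux_u_lb r hx.1 (hx.2.trans ha1.le)
      have h2 : 0 < (1-x) * (Real.cosh r - 1) := by
        apply mul_pos _ (by linarith)
        have := hx.2; linarith
      linarith
    have hgderiv : ∀ x ∈ Set.uIcc (0:ℝ) a, HasDerivAt g (g' x) x := by
      intro x hx
      rw [Set.uIcc_of_le ha0.le] at hx
      exact aux_hasDerivAt_g r (hupos x hx)
    set v := fun x => Real.sin (θ * x) / θ with hv_def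
    have hvderiv : ∀ x ∈ Set.uIcc (0:ℝ) a, HasDerivAt v (Real.cos (θ * x)) x := by
      intro x _
      have h1 : HasDerivAt (fun y : ℝ => θ * y) θ x := by
        simpa using (hasDerivAt_id x).const_mul θ
      have h2 := ((Real.hasDerivAt_sin (θ*x)).comp x h1).div_const θ
      have h3 : Real.cos (θ*x) * θ / θ = Real.cos (θ*x) :=
        mul_div_cancel_right₀ _ hθpos.ne'
      rw [h3] at h2
      exact h2
    have hg'cont : ContinuousOn g' (Set.uIcc (0:ℝ) a) := by
      rw [Set.uIcc_of_le ha0.le, hg'_def]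
      apply ContinuousOn.div
      · fun_prop
      · fun_prop
      · intro x hx
        have h := hupos x hx
        have : 0 < Real.sqrt (Real.cosh r - Real.cosh (r*x)) := Real.sqrt_pos.2 h
        positivity
    have hg'int : IntervalIntegrable g' volume 0 a := hg'cont.intervalIntegrable
    have hg'nonneg : ∀ x ∈ Set.Icc (0:ℝ) a, 0 ≤ g' x := by
      intro x hx
      have hu := hupos x hx
      have hs : 0 ≤ Real.sinh (r*x) := Real.sinh_nonneg_iff.2 (mul_nonneg hr.le hx.1)
      simp only [hg'_def]
      exact div_nonneg (mul_nonneg hr.le hs)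
        (mul_nonneg (by linarith) (Real.sqrt_nonneg _))
    have hftc : ∫ x in (0:ℝ)..a, g' x = g a - g 0 :=
      intervalIntegral.integral_eq_sub_of_hasDerivAt hgderiv hg'int
    have hibp : ∫ x in (0:ℝ)..a, g x * Real.cos (θ * x) =
        g a * v a - g 0 * v 0 - ∫ x in (0:ℝ)..a, g' x * v x :=
      intervalIntegral.integral_mul_deriv_eq_deriv_mul hgderiv hvderiv hg'int
        ((Real.continuous_cos.comp (continuous_const.mul continuous_id)).intervalIntegrable 0 a)
    have hfeq : ∫ x in (0:ℝ)..a, f x = ∫ x in (0:ℝ)..a, g x * Real.cos (θ * x) := by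
      apply intervalIntegral.integral_congr
      intro x _
      simp only [hf_def, hg_def, hθ_def]
      ring
    -- bound on g a
    have hga : g a ≤ c * t ^ ((1:ℝ)/2) := by
      have hua : (1/t) * (Real.cosh r - 1) ≤ Real.cosh r - Real.cosh (r*a) := by
        have h := aux_u_lb r ha0.le ha1.le
        have e : (1:ℝ) - a = 1/t := by rw [ha_def]; ring
        rw [e] at h; exact h
      have hpos2 : 0 < (1/t) * (Real.cosh r - 1) := mul_pos hδ (by linarith)
      rw [hg_def]
      have h1 : 1 / Real.sqrt (Real.cosh r - Real.cosh (r*a)) ≤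
          1 / Real.sqrt ((1/t) * (Real.cosh r - 1)) := by
        apply one_div_le_one_div_of_le (Real.sqrt_pos.2 hpos2) (Real.sqrt_le_sqrt hua)
      refine h1.trans_eq ?_
      rw [Real.sqrt_mul hδ.le, one_div, mul_inv, ← one_div (Real.sqrt (Real.cosh r - 1)),
        show (1/t) = t⁻¹ from one_div t, Real.sqrt_inv, inv_inv, Real.sqrt_eq_rpow]
      ring
    have hg0 : 0 ≤ g 0 := by rw [hg_def]; positivity
    have hgann : 0 ≤ g a := by rw [hg_def]; positivity
    have hgmono : g 0 ≤ g a := by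
      have h := intervalIntegral.integral_nonneg (μ := volume) ha0.le (fun x hx => hg'nonneg x hx)
      rw [hftc] at h; linarith
    have hv_le : ∀ x, |v x| ≤ 1/θ := by
      intro x
      rw [hv_def, abs_div, abs_of_pos hθpos]
      exact (div_le_div_iff_of_pos_right hθpos).2
        (abs_le.2 ⟨Real.neg_one_le_sin _, Real.sin_le_one _⟩)
    have hrem : |∫ x in (0:ℝ)..a, g' x * v x| ≤ (g a - g 0) / θ := by
      have hb : |∫ x in (0:ℝ)..a, g' x * v x| ≤ |∫ x in (0:ℝ)..a, g' x * (1/θ)| := by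
        rw [← Real.norm_eq_abs]
        apply intervalIntegral.norm_integral_le_abs_of_norm_le ?_ (hg'int.mul_const _)
        filter_upwards [ae_restrict_mem measurableSet_uIoc] with x hx
        rw [Set.uIoc_of_le ha0.le] at hx
        have h0 := hg'nonneg x ⟨hx.1.le, hx.2⟩
        rw [Real.norm_eq_abs, abs_mul, abs_of_nonneg h0]
        exact mul_le_mul_of_nonneg_left (hv_le x) h0
      rw [intervalIntegral.integral_mul_const, hftc] at hb
      refine hb.trans_eq ?_
      have hnn : 0 ≤ (g a - g 0) * (1/θ) := mul_nonneg (by linarith) (one_div_pos.2 hθpos).le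
      rw [abs_of_nonneg hnn, mul_one_div]
    have hv0 : v 0 = 0 := by rw [hv_def]; simp
    have hmain : |∫ x in (0:ℝ)..a, f x| ≤ 2 * (c * t ^ ((1:ℝ)/2)) / θ := by
      rw [hfeq, hibp, hv0, mul_zero, sub_zero]
      have h1 : |g a * v a| ≤ g a * (1/θ) := by
        rw [abs_mul, abs_of_nonneg hgann]
        exact mul_le_mul_of_nonneg_left (hv_le a) hgann
      have h2 := hrem
      have h3 : |g a * v a - ∫ x in (0:ℝ)..a, g' x * v x| ≤
          g a * (1/θ) + (g a - g 0)/θ := by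
        refine (abs_sub _ _).trans ?_
        exact add_le_add h1 h2
      refine h3.trans ?_
      rw [mul_one_div, ← add_div]
      exact (div_le_div_iff_of_pos_right hθpos).2 (by linarith)
    have htail : |∫ x in a..1, f x| ≤ c * (2 * t ^ (-(1:ℝ)/2)) := by
      have h1 : |∫ x in a..1, f x| ≤ |∫ x in a..1, c * (1-x) ^ (-(1:ℝ)/2)| := by
        rw [← Real.norm_eq_abs]
        apply intervalIntegral.norm_integral_le_abs_of_norm_le ?_ (aux_G_int c a 1)
        filter_upwards [ae_restrict_mem measurableSet_uIoc] with x hx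
        rw [Set.uIoc_of_le ha1.le] at hx
        exact hbound x ⟨ha0.le.trans hx.1.le, hx.2⟩
      rw [intervalIntegral.integral_const_mul, aux_G_val a ha1.le] at h1
      have e : (1:ℝ) - a = 1/t := by rw [ha_def]; ring
      rw [e] at h1
      have e2 : ((1:ℝ)/t) ^ ((1:ℝ)/2) = t ^ (-(1:ℝ)/2) := by
        rw [one_div, Real.inv_rpow ht.le, ← Real.rpow_neg ht.le]
        norm_num
      rw [e2] at h1
      refine h1.trans_eq (abs_of_nonneg (by positivity))
    have hsplit : ∫ x in (0:ℝ)..1, f x = (∫ x in (0:ℝ)..a, f x) + ∫ x in a..1, f x := by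
      symm
      apply intervalIntegral.integral_add_adjacent_intervals
      · apply hfi.mono_set
        rw [Set.uIcc_of_le ha0.le, Set.uIcc_of_le (by norm_num : (0:ℝ) ≤ 1)]
        exact Set.Icc_subset_Icc le_rfl ha1.le
      · apply hfi.mono_set
        rw [Set.uIcc_of_le ha1.le, Set.uIcc_of_le (by norm_num : (0:ℝ) ≤ 1)]
        exact Set.Icc_subset_Icc ha0.le le_rfl
    rw [hsplit]
    have habs := abs_add_le (∫ x in (0:ℝ)..a, f x) (∫ x in a..1, f x)
    have hfinal : 2 * (c * t ^ ((1:ℝ)/2)) / θ + c * (2 * t ^ (-(1:ℝ)/2)) =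
        (2 * c * (1 + 1/r)) * t ^ (-(1:ℝ)/2) := by
      have e : t ^ (-(1:ℝ)/2) * t = t ^ ((1:ℝ)/2) := by
        nth_rewrite 2 [← Real.rpow_one t]
        rw [← Real.rpow_add ht]
        norm_num
      rw [hθ_def, ← e]
      field_simp
      ring
    linarith [hmain, htail, habs]

/-- Oscillatory decay of the spherical function integral: for every `r > 0` there exists
`C > 0` (depending only on `r`) such that for all `s ≠ 0`,
`|∫₀¹ cos(s·r·x)/√(cosh r − cosh(r·x)) dx| ≤ C·|s|^{−1/2}`. -/
theorem spherical_integral_decay (r : ℝ) (hr : 0 < r) :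
    ∃ C : ℝ, 0 < C ∧ ∀ s : ℝ, s ≠ 0 →
      |∫ x in (0:ℝ)..1, Real.cos (s * r * x) / Real.sqrt (Real.cosh r - Real.cosh (r * x))| ≤
        C * |s| ^ (-(1:ℝ) / 2) := by
  have hcr : (1:ℝ) < Real.cosh r := Real.one_lt_cosh.2 hr.ne'
  have hsq : 0 < Real.sqrt (Real.cosh r - 1) := Real.sqrt_pos.2 (by linarith)
  refine ⟨2 * (1 / Real.sqrt (Real.cosh r - 1)) * (1 + 1/r), by positivity, ?_⟩
  intro s hs
  have habs : 0 < |s| := abs_pos.2 hs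
  have heq : ∫ x in (0:ℝ)..1, Real.cos (s * r * x) / Real.sqrt (Real.cosh r - Real.cosh (r * x))
      = ∫ x in (0:ℝ)..1, Real.cos (|s| * r * x) / Real.sqrt (Real.cosh r - Real.cosh (r * x)) := by
    apply intervalIntegral.integral_congr
    intro x hx
    rw [Set.uIcc_of_le (by norm_num : (0:ℝ) ≤ 1)] at hx
    have e : |s| * r * x = |s * r * x| := by
      rw [abs_mul, abs_mul, abs_of_pos hr, abs_of_nonneg hx.1]
    simp only []
    rw [e, Real.cos_abs]
  rw [heq]
  exact aux_key r hr |s| habs
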